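/- Let σ : ℝ → ℝ be real analytic and Lipschitz continuous, let x₀ ∈ ℝ with σ(x₀) = 0 and σ(x) ≠ 0 for all x ≠ x₀ in some punctured neighborhood of x₀, and let F : ℝ × ℝ → ℝ satisfy ∂F/∂y(x, y) = σ(F(x, y)) and F(x, 0) = x for all x, y ∈ ℝ. Define h₁ = σ, h_{k+1} = σ·h_k′, Φ₀ = 1, and Φ_k = h_k′(x₀) for k ≥ 1. Then for every y ∈ ℝ, lim_{x → x₀, x ≠ x₀} σ(F(x, y))/σ(x) = Σ_{k≥0} Φ_k·y^k/k!. -/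

import Mathlib

open Filter Set

theorem fokker_planck_flow_ratio_limit_at_zero
    (σ : ℝ → ℝ) (hσa : AnalyticOnNhd ℝ σ Set.univ)
    (L : NNReal) (hσ : LipschitzWith L σ)
    (x₀ : ℝ) (hz : σ x₀ = 0)
    (hiso : ∃ ε > (0:ℝ), ∀ x : ℝ, x ≠ x₀ → |x - x₀| < ε → σ x ≠ 0)
    (F : ℝ → ℝ → ℝ)
    (hF : ∀ x y : ℝ, HasDerivAt (fun y => F x y) (σ (F x y)) y)
    (hF0 : ∀ x : ℝ, F x 0 = x)
    (h : ℕ → ℝ → ℝ)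
    (hh1 : h 1 = σ)
    (hhk : ∀ k : ℕ, 1 ≤ k → h (k + 1) = fun x => σ x * deriv (h k) x)
    (Φ : ℕ → ℝ)
    (hΦ0 : Φ 0 = 1)
    (hΦk : ∀ k : ℕ, 1 ≤ k → Φ k = deriv (h k) x₀) :
    ∀ y : ℝ,
      Tendsto (fun x => σ (F x y) / σ x) (nhdsWithin x₀ {x₀}ᶜ)
        (nhds (∑' k : ℕ, Φ k * y ^ k / (Nat.factorial k : ℝ))) := by
  intro y
  set c : ℝ := deriv σ x₀ with hc
  have hσd : ∀ z : ℝ, HasDerivAt σ (deriv σ z) z := fun z =>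
    ((hσa z (mem_univ z)).differentiableAt).hasDerivAt
  have hσ'a : AnalyticOnNhd ℝ (deriv σ) Set.univ := hσa.deriv
  have hσ'c : Continuous (deriv σ) := by
    rw [← continuousOn_univ]; exact hσ'a.continuousOn
  -- Step 1 : Φ k = c ^ k
  have key : ∀ k : ℕ, 1 ≤ k → AnalyticOnNhd ℝ (h k) Set.univ ∧ deriv (h k) x₀ = c ^ k := by
    intro k hk
    induction k with
    | zero => omega
    | succ n ih =>
      by_cases hn : n = 0
      · subst hn
        refine ⟨by rwa [hh1], by rw [hh1, pow_one]⟩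
      · have hn1 : 1 ≤ n := Nat.one_le_iff_ne_zero.mpr hn
        obtain ⟨ha, hd⟩ := ih hn1
        have ha' : AnalyticOnNhd ℝ (deriv (h n)) Set.univ := ha.deriv
        refine ⟨by rw [hhk n hn1]; exact hσa.mul ha', ?_⟩
        rw [hhk n hn1]
        have h2 : HasDerivAt (deriv (h n)) (deriv (deriv (h n)) x₀) x₀ :=
          ((ha' x₀ (mem_univ _)).differentiableAt).hasDerivAt
        rw [show (fun x => σ x * deriv (h n) x) = σ * deriv (h n) from rfl, ((hσd x₀).mul h2).deriv, hz, hd]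
        ring
  have hΦ : ∀ k : ℕ, Φ k = c ^ k := by
    intro k
    cases k with
    | zero => simpa using hΦ0
    | succ n => rw [hΦk _ (Nat.le_add_left 1 n), (key _ (Nat.le_add_left 1 n)).2]
  -- Step 2 : the tsum is exp (c * y)
  have hts : (∑' k : ℕ, Φ k * y ^ k / (Nat.factorial k : ℝ)) = Real.exp (c * y) := by
    rw [Real.exp_eq_exp_ℝ, NormedSpace.exp_eq_tsum_div]
    exact tsum_congr fun k => by rw [hΦ k, ← mul_pow]
  rw [hts]
  -- continuity of F in time
  have hFc : ∀ x : ℝ, Continuous (fun t => F x t) :=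
    fun x => Differentiable.continuous (fun t : ℝ => (hF x t).differentiableAt)
  -- Step 3 : Gronwall bound
  have fwd : ∀ x b : ℝ, ∀ t ∈ Icc (0:ℝ) b,
      dist (F x t) x₀ ≤ dist x x₀ * Real.exp (L * t) := by
    intro x b t ht
    have H := dist_le_of_trajectories_ODE (v := fun _ u => σ u) (K := L)
      (fun _ => hσ) ((hFc x).continuousOn)
      (fun t _ => (hF x t).hasDerivWithinAt)
      (continuousOn_const (c := x₀))
      (fun t _ => by simpa [hz] using (hasDerivWithinAt_const t (Ici t) x₀))
      (le_of_eq (by rw [hF0])) t ht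
    simpa using H
  have bwd : ∀ x b : ℝ, ∀ t ∈ Icc (0:ℝ) b,
      dist (F x (-t)) x₀ ≤ dist x x₀ * Real.exp (L * t) := by
    intro x b t ht
    have hneg : LipschitzWith L (fun u => -σ u) := by
      intro u v
      simpa [edist_neg_neg] using hσ u v
    have hfd : ∀ t : ℝ, HasDerivAt (fun t => F x (-t)) (-σ (F x (-t))) t := by
      intro t
      have := (hF x (-t)).comp t (hasDerivAt_neg t)
      simpa [Function.comp_def, mul_comm] using this
    have H := dist_le_of_trajectories_ODE (v := fun _ u => -σ u) (K := L) (f := fun t => F x (-t)) (g := fun _ => x₀) (δ := dist x x₀)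
      (fun _ => hneg) (((hFc x).comp continuous_neg).continuousOn)
      (fun t _ => (hfd t).hasDerivWithinAt)
      (continuousOn_const (c := x₀))
      (fun t _ => by simpa [hz] using (hasDerivWithinAt_const t (Ici t) x₀))
      (le_of_eq (by simp [hF0])) t ht
    simpa using H
  have grow : ∀ x t : ℝ, dist (F x t) x₀ ≤ dist x x₀ * Real.exp (L * |t|) := by
    intro x t
    rcases le_or_gt 0 t with h1 | h1
    · simpa [abs_of_nonneg h1] using fwd x t t ⟨h1, le_refl t⟩
    · have := bwd x (-t) (-t) ⟨by linarith, le_refl _⟩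
      simpa [abs_of_neg h1] using this
  -- Step 4 : exponential representation
  have rep : ∀ x : ℝ, σ (F x y)
      = σ x * Real.exp (∫ s in (0:ℝ)..y, deriv σ (F x s)) := by
    intro x
    set a : ℝ → ℝ := fun t => deriv σ (F x t) with ha_def
    have hac : Continuous a := hσ'c.comp (hFc x)
    set A : ℝ → ℝ := fun t => ∫ s in (0:ℝ)..t, a s with hA_def
    have hA : ∀ t : ℝ, HasDerivAt A (a t) t := fun t =>
      (hac.integral_hasStrictDerivAt 0 t).hasDerivAt
    have hu : ∀ t : ℝ, HasDerivAt (fun t => σ (F x t)) (a t * σ (F x t)) t := by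
      intro t
      have := (hσd (F x t)).comp t (hF x t)
      simpa [Function.comp_def] using this
    set G : ℝ → ℝ := fun t => Real.exp (-A t) * σ (F x t) with hG_def
    have hG : ∀ t : ℝ, HasDerivAt G 0 t := by
      intro t
      have h1 : HasDerivAt (fun t => Real.exp (-A t)) (Real.exp (-A t) * (-a t)) t :=
        ((hA t).neg).exp
      have h2 := h1.mul (hu t)
      convert (show HasDerivAt (fun t => Real.exp (-A t) * σ (F x t)) _ t from h2) using 1
      ring
    have hconst : G y = G 0 :=
      is_const_of_deriv_eq_zero (fun s => (hG s).differentiableAt)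
        (fun s => (hG s).deriv) y 0
    have hA0 : A 0 = 0 := intervalIntegral.integral_same
    have hG0 : G 0 = σ x := by
      simp [hG_def, hA0, hF0]
    have : Real.exp (-A y) * σ (F x y) = σ x := by
      rw [← hG0]; exact hconst
    have h3 : σ (F x y) = Real.exp (A y) * (Real.exp (-A y) * σ (F x y)) := by
      rw [← mul_assoc, ← Real.exp_add]
      simp
    rw [h3, this, mul_comm]
  -- Step 5 : limit of the integral
  have hlim : Tendsto (fun x => ∫ s in (0:ℝ)..y, deriv σ (F x s))
      (nhdsWithin x₀ {x₀}ᶜ) (nhds (c * y)) := by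
    rw [Metric.tendsto_nhdsWithin_nhds]
    intro ε hε
    have hy1 : (0:ℝ) < |y| + 1 := by positivity
    have hε' : 0 < ε / (|y| + 1) := by positivity
    obtain ⟨δ', hδ'pos, hδ'⟩ := Metric.continuousAt_iff.mp hσ'c.continuousAt _ hε'
    set M := Real.exp (L * |y|) with hM
    have hMpos : 0 < M := Real.exp_pos _
    refine ⟨δ' / M, by positivity, ?_⟩
    intro x _ hdx
    have hbound : ∀ s ∈ Set.uIoc (0:ℝ) y, ‖deriv σ (F x s) - c‖ ≤ ε / (|y| + 1) := by
      intro s hs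
      have hs1 : |s| ≤ |y| := by
        rcases hs with ⟨hs1, hs2⟩
        rw [abs_le]
        constructor
        · calc -|y| ≤ min 0 y := le_min (neg_nonpos.mpr (abs_nonneg y)) (neg_abs_le y)
            _ ≤ s := le_of_lt hs1
        · calc s ≤ max 0 y := hs2
            _ ≤ |y| := max_le (by positivity) (le_abs_self y)
      have hFs : dist (F x s) x₀ < δ' := by
        have h1 : dist (F x s) x₀ ≤ dist x x₀ * Real.exp (L * |s|) := grow x s
        have h2 : Real.exp ((L:ℝ) * |s|) ≤ M :=
          Real.exp_le_exp.mpr (mul_le_mul_of_nonneg_left hs1 L.coe_nonneg)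
        calc dist (F x s) x₀ ≤ dist x x₀ * M := by nlinarith [dist_nonneg (x := x) (y := x₀), Real.exp_pos ((L:ℝ) * |s|)]
          _ < (δ' / M) * M := by exact mul_lt_mul_of_pos_right hdx hMpos
          _ = δ' := by field_simp
      have := hδ' hFs
      rw [Real.dist_eq] at this
      exact le_of_lt (by simpa [Real.norm_eq_abs] using this)
    have hint : IntervalIntegrable (fun s => deriv σ (F x s)) MeasureTheory.volume 0 y :=
      (hσ'c.comp (hFc x)).intervalIntegrable 0 y
    have hcy : (c * y) = ∫ s in (0:ℝ)..y, c := by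
      simp [mul_comm]
    rw [Real.dist_eq, hcy, ← intervalIntegral.integral_sub hint intervalIntegrable_const]
    have hnorm := intervalIntegral.norm_integral_le_of_norm_le_const hbound
    rw [Real.norm_eq_abs] at hnorm
    calc |∫ s in (0:ℝ)..y, (deriv σ (F x s) - c)| ≤ ε / (|y| + 1) * |y - 0| := hnorm
      _ = ε / (|y| + 1) * |y| := by rw [sub_zero]
      _ < ε := by
          rw [div_mul_eq_mul_div, div_lt_iff₀ hy1]
          nlinarith [abs_nonneg y]
  -- Step 6 : combine
  obtain ⟨ε₀, hε₀, hne⟩ := hiso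
  have hev : ∀ᶠ x in nhdsWithin x₀ {x₀}ᶜ,
      Real.exp (∫ s in (0:ℝ)..y, deriv σ (F x s)) = σ (F x y) / σ x := by
    have hball : ∀ᶠ x in nhdsWithin x₀ {x₀}ᶜ, dist x x₀ < ε₀ :=
      mem_nhdsWithin_of_mem_nhds (Metric.ball_mem_nhds x₀ hε₀)
    filter_upwards [hball, self_mem_nhdsWithin] with x hx1 hx2
    have hxne : x ≠ x₀ := hx2
    have hσx : σ x ≠ 0 := hne x hxne (by rwa [Real.dist_eq] at hx1)
    rw [rep x, mul_div_cancel_left₀ _ hσx]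
  exact Tendsto.congr' hev ((Real.continuous_exp.tendsto _).comp hlim)
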